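/- arXiv:2109.02016 — 6 statements merged into one kernel-verified Lean document; each statement's English description precedes it below -/
import Mathlib

section
/- (Decomposition-based zonotope bundle propagation, core inclusion.) Let Z ⊆ ℝ^{n_z} be an intersection of zonotopes Z = ⋂_{s=1}^S {G_s, c_s}_Z, and let f : ℝ^{n_z} → ℝ^{n_x}. For each s, suppose there exist H_s ∈ ℝ^{n_x × n_s} and vectors g̲^s ≤ ḡ^s in ℝ^{n_x} such that f(G_s ξ + c_s) − H_s ξ ∈ [g̲^s, ḡ^s] for all ξ ∈ B∞^{n_s}. Then f(Z) ⊆ ⋂_{s=1}^S {[H_s (1/2)diag(ḡ^s − g̲^s)], (1/2)(ḡ^s + g̲^s)}_Z. -/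
/-- decomposition-based zonotope-bundle propagation. -/
theorem zb_propagation (nz nx S : ℕ) (ns : Fin S → ℕ)
    (G : (s : Fin S) → Matrix (Fin nz) (Fin (ns s)) ℝ) (c : Fin S → Fin nz → ℝ)
    (f : (Fin nz → ℝ) → (Fin nx → ℝ))
    (H : (s : Fin S) → Matrix (Fin nx) (Fin (ns s)) ℝ)
    (glo ghi : Fin S → Fin nx → ℝ)
    (hle : ∀ s, glo s ≤ ghi s)
    (hbound : ∀ s : Fin S, ∀ ξ : Fin (ns s) → ℝ, (∀ i, |ξ i| ≤ 1) →
      glo s ≤ f ((G s).mulVec ξ + c s) - (H s).mulVec ξ ∧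
      f ((G s).mulVec ξ + c s) - (H s).mulVec ξ ≤ ghi s) :
    f '' (⋂ s : Fin S,
        {z | ∃ ξ : Fin (ns s) → ℝ, (∀ i, |ξ i| ≤ 1) ∧ z = (G s).mulVec ξ + c s}) ⊆
      ⋂ s : Fin S, {y : Fin nx → ℝ |
        ∃ ξ : Fin (ns s) → ℝ, (∀ i, |ξ i| ≤ 1) ∧
        ∃ θ : Fin nx → ℝ, (∀ i, |θ i| ≤ 1) ∧
        y = fun i => ((H s).mulVec ξ) i + (1 / 2) * (ghi s i - glo s i) * θ i
              + (1 / 2) * (ghi s i + glo s i)} := by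
  rintro y ⟨z, hz, rfl⟩
  simp only [Set.mem_iInter, Set.mem_setOf_eq] at hz ⊢
  intro s
  obtain ⟨ξ, hξ, rfl⟩ := hz s
  refine ⟨ξ, hξ, ?_⟩
  obtain ⟨hlo, hhi⟩ := hbound s ξ hξ
  set r : Fin nx → ℝ := f ((G s).mulVec ξ + c s) - (H s).mulVec ξ with hr
  refine ⟨fun i => if ghi s i - glo s i = 0 then 0 else
      (2 * r i - (ghi s i + glo s i)) / (ghi s i - glo s i), ?_, ?_⟩
  · intro i
    dsimp only
    by_cases h : ghi s i - glo s i = 0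
    · simp [h]
    · have hpos : 0 < ghi s i - glo s i := lt_of_le_of_ne (by linarith [hle s i]) (Ne.symm h)
      have h1 := hlo i
      have h2 := hhi i
      simp only [Pi.sub_apply] at h1 h2
      rw [if_neg h, abs_div, abs_of_pos hpos, div_le_one hpos, abs_le]
      constructor <;> linarith
  · funext i
    dsimp only
    have hri : r i = f ((G s).mulVec ξ + c s) i - (H s).mulVec ξ i := rfl
    by_cases h : ghi s i - glo s i = 0
    · have h1 := hlo i
      have h2 := hhi i
      simp only [Pi.sub_apply] at h1 h2
      simp only [h, if_pos]
      have : r i = glo s i := by linarith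
      rw [hri] at this
      linarith
    · rw [if_neg h]
      field_simp
      rw [hri]
      ring
end

section
/- (Decomposition-based update, zonotope case, single constraint pair.) Let Z_f = {G_f α + c_f : α ∈ B∞^{n_r}} ⊆ ℝ^{n_x} be a zonotope, Z_μ = {G_μ ζ + c_μ : ζ ∈ B∞^{n_t}} ⊆ ℝ^{n_μ} a zonotope, and μ : ℝ^{n_x} → ℝ^{n_μ}. Suppose there exist Q ∈ ℝ^{n_μ × n_r} and p̲ ≤ p̄ ∈ ℝ^{n_μ} such that μ(G_f α + c_f) − Qα ∈ [p̲, p̄] for all α ∈ B∞^{n_r}. Then the generalized intersection {x ∈ Z_f : μ(x) ∈ Z_μ} is contained in the constrained zonotope {[G_f 0], c_f, [Q −G_μ (1/2)diag(p̄ − p̲)], c_μ − (1/2)(p̄ + p̲)}_{CZ}, i.e., the set {G_f α + c_f : ∃ζ ∈ B∞^{n_t}, θ ∈ B∞^{n_μ}, α ∈ B∞^{n_r}, Qα − G_μ ζ + (1/2)diag(p̄ − p̲)θ = c_μ − (1/2)(p̄ + p̲)}. -/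
/-- decomposition-based update, zonotope case: the generalized
intersection {x ∈ Z_f : μ(x) ∈ Z_μ} is contained in a constrained zonotope. -/
theorem zb_update (nx nmu nr nt : ℕ)
    (Gf : Matrix (Fin nx) (Fin nr) ℝ) (cf : Fin nx → ℝ)
    (Gmu : Matrix (Fin nmu) (Fin nt) ℝ) (cmu : Fin nmu → ℝ)
    (mu : (Fin nx → ℝ) → (Fin nmu → ℝ))
    (Q : Matrix (Fin nmu) (Fin nr) ℝ) (plo phi : Fin nmu → ℝ) (hle : plo ≤ phi)
    (hbound : ∀ α : Fin nr → ℝ, (∀ i, |α i| ≤ 1) →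
      plo ≤ mu (Gf.mulVec α + cf) - Q.mulVec α ∧
      mu (Gf.mulVec α + cf) - Q.mulVec α ≤ phi) :
    {x | (∃ α : Fin nr → ℝ, (∀ i, |α i| ≤ 1) ∧ x = Gf.mulVec α + cf) ∧
         (∃ ζ : Fin nt → ℝ, (∀ i, |ζ i| ≤ 1) ∧ mu x = Gmu.mulVec ζ + cmu)} ⊆
      {x : Fin nx → ℝ | ∃ α : Fin nr → ℝ, (∀ i, |α i| ≤ 1) ∧
        ∃ ζ : Fin nt → ℝ, (∀ i, |ζ i| ≤ 1) ∧
        ∃ θ : Fin nmu → ℝ, (∀ i, |θ i| ≤ 1) ∧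
        x = Gf.mulVec α + cf ∧
        (fun i => (Q.mulVec α) i - (Gmu.mulVec ζ) i
            + (1 / 2) * (phi i - plo i) * θ i)
          = fun i => cmu i - (1 / 2) * (phi i + plo i)} := by
  rintro x ⟨⟨α, hα, rfl⟩, ζ, hζ, hmu⟩
  obtain ⟨hlo, hhi⟩ := hbound α hα
  have h1 : ∀ i, plo i ≤ mu (Gf.mulVec α + cf) i - Q.mulVec α i := fun i => hlo i
  have h2 : ∀ i, mu (Gf.mulVec α + cf) i - Q.mulVec α i ≤ phi i := fun i => hhi i
  have hmi : ∀ i, mu (Gf.mulVec α + cf) i = Gmu.mulVec ζ i + cmu i := by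
    intro i; rw [hmu]; rfl
  refine ⟨α, hα, ζ, hζ,
    fun i => if h : phi i = plo i then 0
      else (mu (Gf.mulVec α + cf) i - Q.mulVec α i - (1/2) * (phi i + plo i))
        / ((1/2) * (phi i - plo i)), ?_, rfl, ?_⟩
  · intro i
    by_cases h : phi i = plo i
    · simp [h]
    · have h1 := h1 i
      have h2 := h2 i
      have hpos : (0:ℝ) < (1/2) * (phi i - plo i) := by
        have h' := hle i
        have : plo i < phi i := lt_of_le_of_ne h' (fun e => h e.symm)
        linarith
      simp only [h, dif_neg, not_false_iff]
      rw [abs_div, abs_of_pos hpos, div_le_one hpos, abs_le]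
      constructor <;> linarith
  · funext i
    have h1 := h1 i
    have h2 := h2 i
    have hmi := hmi i
    by_cases h : phi i = plo i
    · simp only [h, dif_pos]
      rw [h] at h2
      have hpe : mu (Gf.mulVec α + cf) i - Q.mulVec α i = plo i := le_antisymm h2 h1
      rw [hmi] at hpe
      linarith
    · have hpos : (0:ℝ) < (1/2) * (phi i - plo i) := by
        have h' := hle i
        have : plo i < phi i := lt_of_le_of_ne h' (fun e => h e.symm)
        linarith
      simp only [h, dif_neg, not_false_iff]
      rw [mul_div_cancel₀ _ (ne_of_gt hpos)]
      rw [hmi] at h1 h2 ⊢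
      linarith
end

section
/- (Interval-matrix product with a zonotope, Theorem 1 of Rego et al., zonotope special case.) Let X ⊆ {Ḡξ + c̄ : ξ ∈ B∞^{n̄}} be contained in a zonotope with generators Ḡ ∈ ℝ^{m×n̄} and center c̄ ∈ ℝᵐ, and let 𝕁 = [J̲, J̄] ⊆ ℝ^{n×m} be an interval matrix. Let m ∈ 𝕀ℝⁿ be an interval vector with mid(m) = 0 and (𝕁 − mid(𝕁))c̄ ⊆ m. Define the diagonal matrix P by P_{ii} = (1/2)diam(m_i) + (1/2)Σ_{j=1}^{n̄} Σ_{k=1}^{m} diam(𝕁)_{ik} |Ḡ_{kj}|. Then {Jx : J ∈ 𝕁, x ∈ X} ⊆ mid(𝕁)X ⊕ P·B∞ⁿ. -/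
/-- Rego et al. Theorem 1 (zonotope special case): enclosure of an
interval-matrix/set product by mid(𝕁)X ⊕ P·B∞. -/
theorem interval_matrix_zonotope_enclosure (n m nbar : ℕ)
    (Jlo Jhi : Matrix (Fin n) (Fin m) ℝ) (hJ : ∀ i k, Jlo i k ≤ Jhi i k)
    (Gbar : Matrix (Fin m) (Fin nbar) ℝ) (cbar : Fin m → ℝ)
    (X : Set (Fin m → ℝ))
    (hXz : X ⊆ {x | ∃ ξ : Fin nbar → ℝ, (∀ j, |ξ j| ≤ 1) ∧ x = Gbar.mulVec ξ + cbar})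
    (mlo mhi : Fin n → ℝ) (hmid : ∀ i, mhi i = - mlo i)
    (hm : ∀ J : Matrix (Fin n) (Fin m) ℝ,
      (∀ i k, Jlo i k ≤ J i k ∧ J i k ≤ Jhi i k) →
      ∀ i, ((J - Matrix.of fun i k => (Jhi i k + Jlo i k) / 2).mulVec cbar) i
              ∈ Set.Icc (mlo i) (mhi i))
    (P : Fin n → ℝ)
    (hP : ∀ i, P i = (1 / 2) * (mhi i - mlo i)
        + (1 / 2) * ∑ j : Fin nbar, ∑ k : Fin m, (Jhi i k - Jlo i k) * |Gbar k j|) :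
    {y : Fin n → ℝ | ∃ J : Matrix (Fin n) (Fin m) ℝ,
        (∀ i k, Jlo i k ≤ J i k ∧ J i k ≤ Jhi i k) ∧ ∃ x ∈ X, y = J.mulVec x} ⊆
      {y : Fin n → ℝ | ∃ x ∈ X, ∃ θ : Fin n → ℝ, (∀ i, |θ i| ≤ 1) ∧
        y = fun i => ((Matrix.of fun i k => (Jhi i k + Jlo i k) / 2).mulVec x) i
              + P i * θ i} := by
  rintro y ⟨J, hJmem, x, hx, rfl⟩
  obtain ⟨ξ, hξ, hxeq⟩ := hXz hx
  set Jm : Matrix (Fin n) (Fin m) ℝ := Matrix.of fun i k => (Jhi i k + Jlo i k) / 2 with hJmdef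
  -- residual
  set r : Fin n → ℝ := fun i => (J - Jm).mulVec x i with hrdef
  have hd : ∀ i k, |J i k - Jm i k| ≤ (Jhi i k - Jlo i k) / 2 := by
    intro i k
    have h1 := (hJmem i k).1
    have h2 := (hJmem i k).2
    rw [abs_le]
    constructor <;> simp only [hJmdef, Matrix.of_apply] <;> linarith
  have hrbound : ∀ i, |r i| ≤ P i := by
    intro i
    have hB := hm J hJmem i
    have hBabs : |(J - Jm).mulVec cbar i| ≤ mhi i := by
      rw [abs_le]
      exact ⟨by linarith [hmid i, hB.1], hB.2⟩
    have hA : |∑ k, (J i k - Jm i k) * (Gbar.mulVec ξ) k|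
        ≤ (1 / 2) * ∑ j : Fin nbar, ∑ k : Fin m, (Jhi i k - Jlo i k) * |Gbar k j| := by
      calc |∑ k, (J i k - Jm i k) * (Gbar.mulVec ξ) k|
          ≤ ∑ k, |(J i k - Jm i k) * (Gbar.mulVec ξ) k| := Finset.abs_sum_le_sum_abs _ _
        _ ≤ ∑ k, ∑ j, ((Jhi i k - Jlo i k) / 2) * |Gbar k j| := by
            apply Finset.sum_le_sum
            intro k _
            rw [abs_mul]
            calc |J i k - Jm i k| * |(Gbar.mulVec ξ) k|
                ≤ ((Jhi i k - Jlo i k) / 2) * ∑ j, |Gbar k j| := by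
                  apply mul_le_mul (hd i k) ?_ (abs_nonneg _)
                  · linarith [hd i k, abs_nonneg (J i k - Jm i k)]
                  · calc |(Gbar.mulVec ξ) k| = |∑ j, Gbar k j * ξ j| := rfl
                      _ ≤ ∑ j, |Gbar k j * ξ j| := Finset.abs_sum_le_sum_abs _ _
                      _ ≤ ∑ j, |Gbar k j| := by
                          apply Finset.sum_le_sum
                          intro j _
                          rw [abs_mul]
                          exact mul_le_of_le_one_right (abs_nonneg _) (hξ j)
              _ = ∑ j, ((Jhi i k - Jlo i k) / 2) * |Gbar k j| := by
                  rw [Finset.mul_sum]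
        _ = (1 / 2) * ∑ j : Fin nbar, ∑ k : Fin m, (Jhi i k - Jlo i k) * |Gbar k j| := by
            rw [Finset.sum_comm, Finset.mul_sum]
            congr 1; ext j
            rw [Finset.mul_sum]
            congr 1; ext k
            ring
    have hsplit : r i = (∑ k, (J i k - Jm i k) * (Gbar.mulVec ξ) k)
        + (J - Jm).mulVec cbar i := by
      simp only [hrdef, Matrix.mulVec, dotProduct, hxeq, Matrix.sub_apply,
        Pi.add_apply]
      rw [← Finset.sum_add_distrib]
      congr 1; ext k; ring
    have hPi : P i = mhi i + (1 / 2) * ∑ j : Fin nbar, ∑ k : Fin m,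
        (Jhi i k - Jlo i k) * |Gbar k j| := by
      rw [hP i, hmid i]; ring
    rw [hsplit, hPi]
    calc |(∑ k, (J i k - Jm i k) * (Gbar.mulVec ξ) k) + (J - Jm).mulVec cbar i|
        ≤ |∑ k, (J i k - Jm i k) * (Gbar.mulVec ξ) k| + |(J - Jm).mulVec cbar i| :=
          abs_add_le _ _
      _ ≤ _ := by linarith
  refine ⟨x, hx, fun i => if P i = 0 then 0 else r i / P i, ?_, ?_⟩
  · intro i
    by_cases h : P i = 0
    · simp [h]
    · have hPpos : 0 < P i := lt_of_le_of_ne (le_trans (abs_nonneg _) (hrbound i)) (Ne.symm h)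
      simp only [h, if_false, abs_div, abs_of_pos hPpos]
      rw [div_le_one hPpos]
      exact hrbound i
  · ext i
    by_cases h : P i = 0
    · have : r i = 0 := by
        have h1 := hrbound i
        rw [h] at h1
        have h2 := abs_nonneg (r i)
        have : |r i| = 0 := le_antisymm h1 h2
        exact abs_eq_zero.mp this
      have hr0 : J.mulVec x i = Jm.mulVec x i := by
        have : (J - Jm).mulVec x i = 0 := this
        simp only [Matrix.sub_mulVec, Pi.sub_apply] at this
        linarith
      simp [h, hr0]
    · have hPpos : 0 < P i := lt_of_le_of_ne (le_trans (abs_nonneg _) (hrbound i)) (Ne.symm h)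
      simp only [h, if_false]
      rw [mul_div_cancel₀ _ h]
      have : r i = J.mulVec x i - Jm.mulVec x i := by
        simp [hrdef, Matrix.sub_mulVec]
      rw [this]; ring
end

section
/- (Mean value extension for propagation, Theorem 2 of Rego et al.) Let f : ℝⁿ × ℝ^{n_w} → ℝⁿ be continuously differentiable in its first argument, X ⊆ ℝⁿ and W ⊆ ℝ^{n_w} sets, and h ∈ X. Suppose Z ⊆ ℝⁿ satisfies f(h, W) ⊆ Z, and 𝕁 is an interval matrix with ∇ₓᵀf(x, w) ∈ 𝕁 for all x ∈ X, w ∈ W (where X is convex). Then f(X, W) ⊆ Z ⊕ {J(x − h) : J ∈ 𝕁, x ∈ X}. -/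
/-- mean value extension for propagation (Rego et al., Theorem 2):
f(X, W) ⊆ Z ⊕ {J(x - h) : J ∈ 𝕁, x ∈ X}. -/
theorem mean_value_extension_propagation (n nw : ℕ)
    (f : (Fin n → ℝ) → (Fin nw → ℝ) → (Fin n → ℝ))
    (X : Set (Fin n → ℝ)) (hXconv : Convex ℝ X) (W : Set (Fin nw → ℝ))
    (h : Fin n → ℝ) (hh : h ∈ X)
    (hf : ∀ w ∈ W, ContDiff ℝ 1 (fun x => f x w))
    (Jlo Jhi : Matrix (Fin n) (Fin n) ℝ)
    (hJ : ∀ x ∈ X, ∀ w ∈ W, ∀ i j,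
      Jlo i j ≤ fderiv ℝ (fun x => f x w) x (Pi.single j 1) i ∧
      fderiv ℝ (fun x => f x w) x (Pi.single j 1) i ≤ Jhi i j)
    (Z : Set (Fin n → ℝ)) (hZ : ∀ w ∈ W, f h w ∈ Z) :
    ∀ x ∈ X, ∀ w ∈ W, ∃ z ∈ Z, ∃ J : Matrix (Fin n) (Fin n) ℝ,
      (∀ i j, Jlo i j ≤ J i j ∧ J i j ≤ Jhi i j) ∧ ∃ x' ∈ X,
      f x w = z + J.mulVec (x' - h) := by
  intro x hx w hw
  set F : (Fin n → ℝ) → (Fin n → ℝ) := fun y => f y w with hF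
  have hFc : ContDiff ℝ 1 F := hf w hw
  have hFd : Differentiable ℝ F := hFc.differentiable one_ne_zero
  have hfderivc : Continuous (fderiv ℝ F) := hFc.continuous_fderiv one_ne_zero
  set c : ℝ → (Fin n → ℝ) := fun t => h + t • (x - h) with hc
  have hcc : Continuous c := by
    apply continuous_const.add
    exact continuous_id.smul continuous_const
  have hc0 : c 0 = h := by simp [hc]
  have hc1 : c 1 = x := by simp [hc]
  have hcX : ∀ t ∈ Set.Icc (0:ℝ) 1, c t ∈ X := by
    intro t ht
    have : c t = (1 - t) • h + t • x := by
      simp [hc, smul_sub, sub_smul]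
      abel
    rw [this]
    exact hXconv hh hx (by linarith [ht.2]) ht.1 (by ring)
  -- derivative of F ∘ c
  have hderiv : ∀ t : ℝ, HasDerivAt (fun s => F (c s)) (fderiv ℝ F (c t) (x - h)) t := by
    intro t
    have h1 : HasDerivAt c (x - h) t := by
      have := ((hasDerivAt_id t).smul_const (x - h)).const_add h
      simpa [hc] using this
    exact (hFd (c t)).hasFDerivAt.comp_hasDerivAt t h1
  -- continuity of integrands
  have hcontv : Continuous fun t => fderiv ℝ F (c t) (x - h) :=
    (hfderivc.comp hcc).clm_apply continuous_const
  have hconte : ∀ (i j : Fin n), Continuous fun t => fderiv ℝ F (c t) (Pi.single j 1) i := by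
    intro i j
    exact (continuous_apply i).comp ((hfderivc.comp hcc).clm_apply continuous_const)
  -- the averaged Jacobian
  set J : Matrix (Fin n) (Fin n) ℝ :=
    fun i j => ∫ t in (0:ℝ)..1, fderiv ℝ F (c t) (Pi.single j 1) i with hJdef
  refine ⟨f h w, hZ w hw, J, ?_, x, hx, ?_⟩
  · intro i j
    constructor
    · have := intervalIntegral.integral_mono_on (μ := MeasureTheory.volume) (a := (0:ℝ)) (b := 1) zero_le_one
        (intervalIntegrable_const (c := Jlo i j))
        ((hconte i j).intervalIntegrable 0 1)
        (fun t ht => (hJ (c t) (hcX t ht) w hw i j).1)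
      simpa [hJdef] using this
    · have := intervalIntegral.integral_mono_on (μ := MeasureTheory.volume) (a := (0:ℝ)) (b := 1) zero_le_one
        ((hconte i j).intervalIntegrable 0 1)
        (intervalIntegrable_const (c := Jhi i j))
        (fun t ht => (hJ (c t) (hcX t ht) w hw i j).2)
      simpa [hJdef] using this
  · funext i
    -- scalar MVT for component i
    have hderivi : ∀ t ∈ Set.uIcc (0:ℝ) 1,
        HasDerivAt (fun s => F (c s) i) (fderiv ℝ F (c t) (x - h) i) t := by
      intro t _
      exact (ContinuousLinearMap.proj (R := ℝ) (φ := fun _ : Fin n => ℝ)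
        i).hasFDerivAt.comp_hasDerivAt t (hderiv t)
    have hinti : IntervalIntegrable (fun t => fderiv ℝ F (c t) (x - h) i)
        MeasureTheory.volume 0 1 :=
      ((continuous_apply i).comp hcontv).intervalIntegrable 0 1
    have key : F (c 1) i - F (c 0) i = ∫ t in (0:ℝ)..1, fderiv ℝ F (c t) (x - h) i :=
      (intervalIntegral.integral_eq_sub_of_hasDerivAt hderivi hinti).symm
    rw [hc0, hc1] at key
    -- expand the directional derivative in the basis
    have hexpand : ∀ y : Fin n → ℝ,
        fderiv ℝ F y (x - h) i = ∑ j, fderiv ℝ F y (Pi.single j 1) i * (x - h) j := by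
      intro y
      have hv : (x - h) = ∑ j, (x - h) j • (Pi.single j (1:ℝ) : Fin n → ℝ) := by
        funext k
        rw [Finset.sum_apply]
        simp [Pi.single_apply]
      conv_lhs => rw [hv]
      rw [map_sum]
      simp [mul_comm]
    have hmul : J.mulVec (x - h) i = ∫ t in (0:ℝ)..1, fderiv ℝ F (c t) (x - h) i := by
      have : J.mulVec (x - h) i
          = ∑ j, ∫ t in (0:ℝ)..1, fderiv ℝ F (c t) (Pi.single j 1) i * (x - h) j := by
        simp only [Matrix.mulVec, dotProduct, hJdef]
        congr 1
        funext j
        rw [← intervalIntegral.integral_mul_const]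
      rw [this, ← intervalIntegral.integral_finset_sum]
      · congr 1
        funext t
        exact (hexpand (c t)).symm
      · intro j _
        exact (((hconte i j).mul continuous_const).intervalIntegrable 0 1)
    have : F x i - F h i = J.mulVec (x - h) i := by rw [hmul]; exact key
    simp only [Pi.add_apply]
    have hFx : f x w i = F x i := rfl
    have hFh : f h w i = F h i := rfl
    rw [hFx, hFh]
    linarith
end

section
/- (Mean value extension for the update step with nonlinear observations, core inclusion of Lemma 4.) Let μ : ℝ^{n_x} → ℝ^{n_μ} be continuously differentiable, let X ⊆ ℝ^{n_x} be convex, x₀ ∈ X, and let 𝕁^μ be an interval matrix with ∇ᵀμ(x) ∈ 𝕁^μ for all x ∈ X. Then for every x ∈ X, μ(x) ∈ μ(x₀) ⊕ mid(𝕁^μ)(X ⊖ x₀) ⊕ 𝕁^μ_Δ(X ⊖ x₀), where 𝕁^μ_Δ is the centered interval matrix with [𝕁^μ_Δ]_{ij} = (1/2)[−diam(𝕁^μ)_{ij}, diam(𝕁^μ)_{ij}], X ⊖ x₀ = {x − x₀ : x ∈ X}, and 𝕁^μ_Δ(S) = {Jx : J ∈ 𝕁^μ_Δ, x ∈ S}.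 Consequently, if Y ⊆ ℝ^{n_μ} and R ⊇ 𝕁^μ_Δ(X ⊖ x₀), then {x ∈ X : μ(x) ∈ Y} ⊆ {x ∈ X : ∃y ∈ Y, ∃r ∈ R, y = μ(x₀) + mid(𝕁^μ)(x − x₀) + r}. -/
lemma mve_key (nx nmu : ℕ)
    (mu : (Fin nx → ℝ) → (Fin nmu → ℝ)) (hmu : ContDiff ℝ 1 mu)
    (X : Set (Fin nx → ℝ)) (hXconv : Convex ℝ X) (x0 : Fin nx → ℝ) (hx0 : x0 ∈ X)
    (Jlo Jhi : Matrix (Fin nmu) (Fin nx) ℝ)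
    (hJ : ∀ x ∈ X, ∀ i j,
      Jlo i j ≤ fderiv ℝ mu x (Pi.single j 1) i ∧
      fderiv ℝ mu x (Pi.single j 1) i ≤ Jhi i j)
    (x : Fin nx → ℝ) (hx : x ∈ X) :
    ∃ Δ : Matrix (Fin nmu) (Fin nx) ℝ,
      (∀ i j, |Δ i j| ≤ (1 / 2) * (Jhi i j - Jlo i j)) ∧
      mu x = mu x0
        + (Matrix.of fun i j => (Jhi i j + Jlo i j) / 2).mulVec (x - x0)
        + Δ.mulVec (x - x0) := by
  have hdiff : Differentiable ℝ mu := hmu.differentiable one_ne_zero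
  set L : ℝ → (Fin nx → ℝ) := fun t => x0 + t • (x - x0) with hLdef
  have hLmem : ∀ t ∈ Set.Icc (0:ℝ) 1, L t ∈ X := by
    intro t ht
    have h := hXconv hx0 hx (by linarith [ht.2] : (0:ℝ) ≤ 1 - t) ht.1 (by ring)
    convert h using 1
    funext k
    simp [hLdef]
    ring
  have hLder : ∀ t : ℝ, HasDerivAt L (x - x0) t := by
    intro t
    have h : HasDerivAt (fun t : ℝ => t • (x - x0)) ((1:ℝ) • (x - x0)) t :=
      (hasDerivAt_id t).smul_const (x - x0)
    simpa [hLdef] using h.const_add x0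
  have hcomp : ∀ t : ℝ, ∀ i, HasDerivAt (fun s => mu (L s) i)
      (fderiv ℝ mu (L t) (x - x0) i) t := by
    intro t i
    have h : HasDerivAt (fun s => mu (L s)) (fderiv ℝ mu (L t) (x - x0)) t :=
      (hdiff (L t)).hasFDerivAt.comp_hasDerivAt t (hLder t)
    exact (hasDerivAt_pi.1 h) i
  have mvt : ∀ i : Fin nmu, ∃ c ∈ Set.Ioo (0:ℝ) 1,
      fderiv ℝ mu (L c) (x - x0) i = mu x i - mu x0 i := by
    intro i
    obtain ⟨c, hc, hceq⟩ := exists_hasDerivAt_eq_slope (fun s => mu (L s) i)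
      (fun s => fderiv ℝ mu (L s) (x - x0) i) (by norm_num : (0:ℝ) < 1)
      (fun s _ => ((hcomp s i).continuousAt).continuousWithinAt)
      (fun s _ => hcomp s i)
    refine ⟨c, hc, ?_⟩
    have hL1 : L 1 = x := by funext k; simp [hLdef]
    have hL0 : L 0 = x0 := by funext k; simp [hLdef]
    simpa [hL1, hL0] using hceq
  choose c hc hceq using mvt
  -- the Jacobian rows at the MVT points
  set J : Matrix (Fin nmu) (Fin nx) ℝ :=
    fun i j => fderiv ℝ mu (L (c i)) (Pi.single j 1) i with hJdef
  have hJmem : ∀ i, L (c i) ∈ X := fun i => hLmem _ (Set.Ioo_subset_Icc_self (hc i))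
  have hrow : ∀ i, fderiv ℝ mu (L (c i)) (x - x0) i = ∑ j, J i j * (x - x0) j := by
    intro i
    have hv : (x - x0) = ∑ j, (x - x0) j • (Pi.single j (1:ℝ) : Fin nx → ℝ) := by
      funext k
      simp [Finset.sum_apply, Pi.single_apply, mul_ite]
    calc fderiv ℝ mu (L (c i)) (x - x0) i
        = fderiv ℝ mu (L (c i)) (∑ j, (x - x0) j • (Pi.single j (1:ℝ) : Fin nx → ℝ)) i := by
          rw [← hv]
      _ = (∑ j, (x - x0) j • fderiv ℝ mu (L (c i)) (Pi.single j (1:ℝ))) i := by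
          rw [map_sum]
          simp only [map_smul]
      _ = ∑ j, J i j * (x - x0) j := by
          simp [Finset.sum_apply, hJdef, mul_comm]
  refine ⟨fun i j => J i j - (Jhi i j + Jlo i j) / 2, ?_, ?_⟩
  · intro i j
    have h := hJ _ (hJmem i) i j
    rw [abs_le]
    constructor <;> simp [hJdef] <;> linarith [h.1, h.2]
  · funext i
    have h1 := hceq i
    rw [hrow i] at h1
    simp only [Pi.add_apply, Matrix.mulVec, dotProduct, Matrix.of_apply]
    have h2 : ∑ j, ((Jhi i j + Jlo i j) / 2 * (x - x0) j)
        + ∑ j, ((J i j - (Jhi i j + Jlo i j) / 2) * (x - x0) j)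
        = ∑ j, J i j * (x - x0) j := by
      rw [← Finset.sum_add_distrib]
      exact Finset.sum_congr rfl fun j _ => by ring
    linarith

/-- mean value extension for the update step with nonlinear
observations (core inclusion of Lemma 4). -/
theorem mean_value_extension_update (nx nmu : ℕ)
    (mu : (Fin nx → ℝ) → (Fin nmu → ℝ)) (hmu : ContDiff ℝ 1 mu)
    (X : Set (Fin nx → ℝ)) (hXconv : Convex ℝ X) (x0 : Fin nx → ℝ) (hx0 : x0 ∈ X)
    (Jlo Jhi : Matrix (Fin nmu) (Fin nx) ℝ)
    (hJ : ∀ x ∈ X, ∀ i j,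
      Jlo i j ≤ fderiv ℝ mu x (Pi.single j 1) i ∧
      fderiv ℝ mu x (Pi.single j 1) i ≤ Jhi i j) :
    (∀ x ∈ X, ∃ x1 ∈ X, ∃ x2 ∈ X, ∃ Δ : Matrix (Fin nmu) (Fin nx) ℝ,
      (∀ i j, |Δ i j| ≤ (1 / 2) * (Jhi i j - Jlo i j)) ∧
      mu x = mu x0
        + (Matrix.of fun i j => (Jhi i j + Jlo i j) / 2).mulVec (x1 - x0)
        + Δ.mulVec (x2 - x0)) ∧
    (∀ Y : Set (Fin nmu → ℝ), ∀ R : Set (Fin nmu → ℝ),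
      {r | ∃ Δ : Matrix (Fin nmu) (Fin nx) ℝ,
          (∀ i j, |Δ i j| ≤ (1 / 2) * (Jhi i j - Jlo i j)) ∧
          ∃ x ∈ X, r = Δ.mulVec (x - x0)} ⊆ R →
      {x ∈ X | mu x ∈ Y} ⊆
        {x ∈ X | ∃ y ∈ Y, ∃ r ∈ R,
          y = mu x0
            + (Matrix.of fun i j => (Jhi i j + Jlo i j) / 2).mulVec (x - x0)
            + r}) := by
  constructor
  · intro x hx
    obtain ⟨Δ, hΔ, heq⟩ := mve_key nx nmu mu hmu X hXconv x0 hx0 Jlo Jhi hJ x hx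
    exact ⟨x, hx, x, hx, Δ, hΔ, heq⟩
  · intro Y R hR x hxY
    obtain ⟨hx, hmuY⟩ := hxY
    obtain ⟨Δ, hΔ, heq⟩ := mve_key nx nmu mu hmu X hXconv x0 hx0 Jlo Jhi hJ x hx
    exact ⟨hx, mu x, hmuY, Δ.mulVec (x - x0), hR ⟨Δ, hΔ, x, hx, rfl⟩, heq⟩
end

section
/- (One-dimensional remainder-form decomposition gives valid bounds.) Let f : [z̲, z̄] ⊆ ℝⁿ → ℝ be differentiable with gradient bounds J̲ ≤ ∇f ≤ J̄ on the box. Fix m ∈ ℝⁿ with each m_j ∈ {max(J̄_j, 0), min(J̲_j, 0)}, and define ζ_m(z, ẑ) coordinatewise by ζ_{m,j}(z, ẑ) = ẑ_j if m_j = max(J̄_j, 0) and ζ_{m,j}(z, ẑ) = z_j if m_j = min(J̲_j, 0). Define f_d(z, ẑ; m) := ⟨m, ζ_m(ẑ, z)⟩ + f(ζ_m(z, ẑ)) − ⟨m, ζ_m(z, ẑ)⟩. Then for all z ∈ [z̲, z̄]: f_d(z̲, z̄; m) ≤ f(z) ≤ f_d(z̄, z̲; m). -/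
open Set Finset

set_option maxHeartbeats 1000000

lemma clm_apply_eq_sum {n : ℕ} (L : (Fin n → ℝ) →L[ℝ] ℝ) (v : Fin n → ℝ) :
    L v = ∑ j, v j * L (Pi.single j 1) := by
  have hv : v = ∑ j, v j • (Pi.single j 1 : Fin n → ℝ) := by
    ext i
    simp [Finset.sum_apply, Pi.single_apply]
  conv_lhs => rw [hv]
  simp [map_sum, map_smul, smul_eq_mul]

lemma corner_mono {n : ℕ} (zlo zhi : Fin n → ℝ) (g : (Fin n → ℝ) → ℝ)
    (hdiff : ∀ w ∈ Set.Icc zlo zhi, DifferentiableAt ℝ g w)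
    {z c : Fin n → ℝ} (hz : z ∈ Set.Icc zlo zhi) (hc : c ∈ Set.Icc zlo zhi)
    (hkey : ∀ w ∈ Set.Icc zlo zhi, ∀ j,
        0 ≤ fderiv ℝ g w (Pi.single j 1) * (c j - z j)) :
    g z ≤ g c := by
  set γ : ℝ → (Fin n → ℝ) := fun t => z + t • (c - z) with hγdef
  have hmem : ∀ t ∈ Set.Icc (0:ℝ) 1, γ t ∈ Set.Icc zlo zhi := by
    intro t ht
    have h1 : γ t = (1 - t) • z + t • c := by
      simp only [hγdef]; module
    rw [h1]
    exact (convex_Icc zlo zhi) hz hc (by linarith [ht.2]) ht.1 (by ring)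
  have hγd : ∀ t : ℝ, HasDerivAt γ (c - z) t := by
    intro t
    have := ((hasDerivAt_id t).smul_const (c - z)).const_add z
    simpa [hγdef] using this
  set φ : ℝ → ℝ := fun t => g (γ t) with hφdef
  have hφ : ∀ t ∈ Set.Icc (0:ℝ) 1, HasDerivAt φ (fderiv ℝ g (γ t) (c - z)) t := by
    intro t ht
    exact ((hdiff _ (hmem t ht)).hasFDerivAt).comp_hasDerivAt t (hγd t)
  have hpos : ∀ w ∈ Set.Icc zlo zhi, 0 ≤ fderiv ℝ g w (c - z) := by
    intro w hw
    rw [clm_apply_eq_sum (fderiv ℝ g w) (c - z)]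
    apply Finset.sum_nonneg
    intro j _
    have := hkey w hw j
    simp only [Pi.sub_apply]
    nlinarith [hkey w hw j]
  have hmono : MonotoneOn φ (Set.Icc (0:ℝ) 1) := by
    apply monotoneOn_of_deriv_nonneg (convex_Icc 0 1)
    · intro t ht
      exact (hφ t ht).continuousAt.continuousWithinAt
    · intro t ht
      rw [interior_Icc] at ht
      exact ((hφ t (Set.mem_Icc_of_Ioo ht)).differentiableAt).differentiableWithinAt
    · intro t ht
      rw [interior_Icc] at ht
      rw [(hφ t (Set.mem_Icc_of_Ioo ht)).deriv]
      exact hpos _ (hmem t (Set.mem_Icc_of_Ioo ht))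
  have h01 := hmono (Set.left_mem_Icc.2 zero_le_one) (Set.right_mem_Icc.2 zero_le_one) zero_le_one
  have hγ0 : γ 0 = z := by simp [hγdef]
  have hγ1 : γ 1 = c := by simp [hγdef]
  simpa [hφdef, hγ0, hγ1] using h01



/-- one-dimensional remainder-form decomposition functions give
valid bounds: f_d(z̲, z̄; m) ≤ f(z) ≤ f_d(z̄, z̲; m) on the box. -/
theorem remainder_form_decomposition_valid (n : ℕ) (zlo zhi : Fin n → ℝ)
    (hbox : zlo ≤ zhi) (f : (Fin n → ℝ) → ℝ) (Jlo Jhi : Fin n → ℝ)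
    (hdiff : ∀ z ∈ Set.Icc zlo zhi, DifferentiableAt ℝ f z)
    (hgrad : ∀ z ∈ Set.Icc zlo zhi, ∀ j,
      Jlo j ≤ fderiv ℝ f z (Pi.single j 1) ∧ fderiv ℝ f z (Pi.single j 1) ≤ Jhi j)
    (m : Fin n → ℝ) (cs : Fin n → Bool)
    (hm : ∀ j, (cs j = true → m j = max (Jhi j) 0) ∧
               (cs j = false → m j = min (Jlo j) 0)) :
    ∀ z ∈ Set.Icc zlo zhi,
      -- f_d(z̲, z̄; m) ≤ f(z), where ζ_m(z̲, z̄) selects ẑ=z̄ on `true` coordinates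
      ((∑ j, m j * (fun j => if cs j then zlo j else zhi j) j)
        + f (fun j => if cs j then zhi j else zlo j)
        - ∑ j, m j * (fun j => if cs j then zhi j else zlo j) j ≤ f z) ∧
      (f z ≤ (∑ j, m j * (fun j => if cs j then zhi j else zlo j) j)
        + f (fun j => if cs j then zlo j else zhi j)
        - ∑ j, m j * (fun j => if cs j then zlo j else zhi j) j) := by
  intro z hz
  obtain ⟨hz1, hz2⟩ := Set.mem_Icc.1 hz
  set L : (Fin n → ℝ) →L[ℝ] ℝ :=
    ∑ j, m j • ContinuousLinearMap.proj (R := ℝ) (φ := fun _ : Fin n => ℝ) j with hLdef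
  have hLapp : ∀ w, L w = ∑ j, m j * w j := by
    intro w
    simp [hLdef, ContinuousLinearMap.sum_apply]
  set g : (Fin n → ℝ) → ℝ := fun w => f w - L w with hgdef
  have hgdiff : ∀ w ∈ Set.Icc zlo zhi, DifferentiableAt ℝ g w := by
    intro w hw
    exact (hdiff w hw).sub L.differentiableAt
  have hgderiv : ∀ w ∈ Set.Icc zlo zhi, ∀ j,
      fderiv ℝ g w (Pi.single j 1) = fderiv ℝ f w (Pi.single j 1) - m j := by
    intro w hw j
    have hF : HasFDerivAt g (fderiv ℝ f w - L) w :=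
      ((hdiff w hw).hasFDerivAt).sub L.hasFDerivAt
    rw [hF.fderiv]
    have : L (Pi.single j 1) = m j := by
      rw [hLapp]
      simp [Pi.single_apply]
    simp [this]
  set cplus : Fin n → ℝ := fun j => if cs j then zlo j else zhi j with hcp
  set cminus : Fin n → ℝ := fun j => if cs j then zhi j else zlo j with hcm
  have hcpmem : cplus ∈ Set.Icc zlo zhi := by
    rw [Set.mem_Icc]
    refine ⟨fun j => ?_, fun j => ?_⟩ <;>
      · show _ ≤ _
        by_cases h : cs j = true <;> simp [hcp, h] <;> exact hbox j
  have hcmmem : cminus ∈ Set.Icc zlo zhi := by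
    rw [Set.mem_Icc]
    refine ⟨fun j => ?_, fun j => ?_⟩ <;>
      · show _ ≤ _
        by_cases h : cs j = true <;> simp [hcm, h] <;> exact hbox j
  have hsign : ∀ w ∈ Set.Icc zlo zhi, ∀ j,
      (cs j = true → fderiv ℝ g w (Pi.single j 1) ≤ 0 ∧ 0 ≤ m j) ∧
      (cs j = false → 0 ≤ fderiv ℝ g w (Pi.single j 1) ∧ m j ≤ 0) := by
    intro w hw j
    have hd := hgderiv w hw j
    have hg1 := (hgrad w hw j).1
    have hg2 := (hgrad w hw j).2
    constructor
    · intro hc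
      have hmj := (hm j).1 hc
      constructor
      · rw [hd, hmj]; have := le_max_left (Jhi j) 0; linarith
      · rw [hmj]; exact le_max_right _ _
    · intro hc
      have hmj := (hm j).2 hc
      constructor
      · rw [hd, hmj]; have := min_le_left (Jlo j) 0; linarith
      · rw [hmj]; exact min_le_right _ _
  have hup : g z ≤ g cplus := by
    apply corner_mono zlo zhi g hgdiff hz hcpmem
    intro w hw j
    rcases Bool.eq_false_or_eq_true (cs j) with hc | hc
    · have := (hsign w hw j).1 hc
      have hcj : cplus j = zlo j := by simp [hcp, hc]
      rw [hcj]
      nlinarith [hz1 j, this.1]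
    · have := (hsign w hw j).2 hc
      have hcj : cplus j = zhi j := by simp [hcp, hc]
      rw [hcj]
      nlinarith [hz2 j, this.1]
  have hlo : g cminus ≤ g z := by
    apply corner_mono zlo zhi g hgdiff hcmmem hz
    intro w hw j
    rcases Bool.eq_false_or_eq_true (cs j) with hc | hc
    · have := (hsign w hw j).1 hc
      have hcj : cminus j = zhi j := by simp [hcm, hc]
      rw [hcj]
      nlinarith [hz2 j, this.1]
    · have := (hsign w hw j).2 hc
      have hcj : cminus j = zlo j := by simp [hcm, hc]
      rw [hcj]
      nlinarith [hz1 j, this.1]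
  have hmz1 : ∑ j, m j * cplus j ≤ ∑ j, m j * z j := by
    apply Finset.sum_le_sum
    intro j _
    rcases Bool.eq_false_or_eq_true (cs j) with hc | hc
    · have := ((hsign z hz j).1 hc).2
      have hcj : cplus j = zlo j := by simp [hcp, hc]
      rw [hcj]
      nlinarith [hz1 j]
    · have := ((hsign z hz j).2 hc).2
      have hcj : cplus j = zhi j := by simp [hcp, hc]
      rw [hcj]
      nlinarith [hz2 j]
  have hmz2 : ∑ j, m j * z j ≤ ∑ j, m j * cminus j := by
    apply Finset.sum_le_sum
    intro j _
    rcases Bool.eq_false_or_eq_true (cs j) with hc | hc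
    · have := ((hsign z hz j).1 hc).2
      have hcj : cminus j = zhi j := by simp [hcm, hc]
      rw [hcj]
      nlinarith [hz2 j]
    · have := ((hsign z hz j).2 hc).2
      have hcj : cminus j = zlo j := by simp [hcm, hc]
      rw [hcj]
      nlinarith [hz1 j]
  have hgz : g z = f z - ∑ j, m j * z j := by rw [hgdef]; simp [hLapp]
  have hgp : g cplus = f cplus - ∑ j, m j * cplus j := by rw [hgdef]; simp [hLapp]
  have hgm : g cminus = f cminus - ∑ j, m j * cminus j := by rw [hgdef]; simp [hLapp]
  rw [hgz, hgp] at hup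
  rw [hgz, hgm] at hlo
  constructor
  · show (∑ j, m j * cplus j) + f cminus - ∑ j, m j * cminus j ≤ f z
    linarith
  · show f z ≤ (∑ j, m j * cminus j) + f cplus - ∑ j, m j * cplus j
    linarith
end
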